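/- For all θ with 0 < θ < π/2, we have 1 < θ/sin θ < 1/cos θ + sqrt((1 - cos θ)/(1 + cos θ)). -/

import Mathlib

open Real
theorem stmt_1 (θ : ℝ) (h1 : 0 < θ) (h2 : θ < π / 2) :
    1 < θ / sin θ ∧ θ / sin θ < 1 / cos θ + Real.sqrt ((1 - cos θ) / (1 + cos θ)) := by
  have hs : 0 < sin θ := sin_pos_of_pos_of_lt_pi h1 (h2.trans (by linarith [pi_pos]))
  have hc : 0 < cos θ := cos_pos_of_mem_Ioo ⟨by linarith [pi_pos], h2⟩
  have hc1 : cos θ < 1 := by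
    nlinarith [Real.sin_sq_add_cos_sq θ, hs]
  have hsin : sin θ < θ := Real.sin_lt h1
  constructor
  · rw [lt_div_iff₀ hs]; linarith
  · have hsq : (1 - cos θ) / (1 + cos θ) = ((1 - cos θ) / sin θ) ^ 2 := by
      have hpy : sin θ ^ 2 = 1 - cos θ ^ 2 := by nlinarith [Real.sin_sq_add_cos_sq θ]
      field_simp
      nlinarith [hpy]
    rw [hsq, Real.sqrt_sq (div_nonneg (by linarith) hs.le)]
    have htan := Real.lt_tan h1 h2
    rw [tan_eq_sin_div_cos] at htan
    rw [div_lt_iff₀ hs]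
    have : θ < sin θ / cos θ + (1 - cos θ) := by linarith
    calc θ < sin θ / cos θ + (1 - cos θ) := this
      _ = (1 / cos θ + (1 - cos θ) / sin θ) * sin θ := by field_simp
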